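/- Let C, L, R, p, V0 > 0, τ = L/R, and let τ_max ≥ τ be a constant. Let v, i : ℝ → ℝ be differentiable functions with v(t) > 0 for all t, satisfying C·v'(t) = −p/v(t) + i(t) and L·i'(t) = −R·i(t) + V0 − v(t). Define P(t) = (V0 − v(t))²/(2R) + p·log v(t) + ((τ_max − τ)/2)·L·(i'(t))² + (τ_max/2)·C·(v'(t))², where i'(t) and v'(t) are expressed through the state via the right-hand sides of the differential equations. Then P is differentiable and P'(t) = −R·(τ_max − τ)·(i'(t))² − (C − τ_max·p/v(t)²)·(v'(t))² for all t. -/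

import Mathlib

/-- Two-bus DC network dynamics `C v' = -p/v + i`, `L i' = -R i + V0 - v`,
line time constant `τ = L/R`, `τmax ≥ τ`.  The Brayton–Moser potential
`P = (V0 - v)²/(2R) + p log v + ((τmax - τ)/2) L i'² + (τmax/2) C v'²`
(with `i'`, `v'` expressed through the state via the right-hand sides of
the ODEs) is differentiable along trajectories, with derivative
`P' = -R (τmax - τ) i'² - (C - τmax p / v²) v'²`. -/
theorem stmt_2 (C L R p V0 τmax : ℝ) (hC : 0 < C) (hL : 0 < L) (hR : 0 < R)
    (hp : 0 < p) (hV0 : 0 < V0) (hτ : L / R ≤ τmax)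
    (v i : ℝ → ℝ) (hv : ∀ t, 0 < v t)
    (hdv : Differentiable ℝ v) (hdi : Differentiable ℝ i)
    (hveq : ∀ t, C * deriv v t = -p / v t + i t)
    (hieq : ∀ t, L * deriv i t = -R * i t + V0 - v t) :
    ∀ t : ℝ,
      HasDerivAt (fun s =>
          (V0 - v s) ^ 2 / (2 * R) + p * Real.log (v s)
            + (τmax - L / R) / 2 * L * ((-R * i s + V0 - v s) / L) ^ 2
            + τmax / 2 * C * ((-p / v s + i s) / C) ^ 2)
        (-(R * (τmax - L / R)) * ((-R * i t + V0 - v t) / L) ^ 2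
          - (C - τmax * p / (v t) ^ 2) * ((-p / v t + i t) / C) ^ 2) t := by
  intro t
  set a := v t with ha
  set b := i t with hb
  have ha0 : a ≠ 0 := ne_of_gt (hv t)
  have hvd : deriv v t = (-p / a + b) / C := by
    have h := hveq t
    rw [← ha, ← hb] at h
    field_simp at h ⊢
    linarith
  have hid : deriv i t = (-R * b + V0 - a) / L := by
    have h := hieq t
    rw [← ha, ← hb] at h
    field_simp at h ⊢
    linarith
  set vt' : ℝ := (-p / a + b) / C with hvt'
  set it' : ℝ := (-R * b + V0 - a) / L with hit'
  have hv' : HasDerivAt v vt' t := hvd ▸ (hdv t).hasDerivAt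
  have hi' : HasDerivAt i it' t := hid ▸ (hdi t).hasDerivAt
  have h1 : HasDerivAt (fun s => (V0 - v s) ^ 2 / (2 * R))
      (2 * (V0 - a) ^ 1 * (0 - vt') / (2 * R)) t :=
    (((hasDerivAt_const t V0).sub hv').pow 2).div_const _
  have h2 : HasDerivAt (fun s => p * Real.log (v s)) (p * (vt' / a)) t :=
    (hv'.log ha0).const_mul p
  have h3 : HasDerivAt (fun s => (τmax - L / R) / 2 * L * ((-R * i s + V0 - v s) / L) ^ 2)
      ((τmax - L / R) / 2 * L *
        (2 * ((-R * b + V0 - a) / L) ^ 1 * ((-R * it' + 0 - vt') / L))) t := by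
    exact (((((hi'.const_mul (-R)).add (hasDerivAt_const t V0)).sub hv').div_const L).pow
      2).const_mul _
  have h4 : HasDerivAt (fun s => τmax / 2 * C * ((-p / v s + i s) / C) ^ 2)
      (τmax / 2 * C *
        (2 * ((-p / a + b) / C) ^ 1 * (((0 * a - (-p) * vt') / a ^ 2 + it') / C))) t := by
    exact (((((hasDerivAt_const t (-p)).div hv' ha0).add hi').div_const C).pow 2).const_mul _
  have := ((h1.add h2).add h3).add h4
  convert this using 1
  case e'_4 => rfl
  case e'_5 => rfl
  case e'_8 => rfl
  rw [hvt', hit']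
  field_simp
  ring
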